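/- In the single-elite infinite-horizon problem, every optimal policy σ(s,p) ∈ argmax_{p'} [R(s,p') - c(p'-p) + β(π V(1,p') + (1-π) V(0,p'))] satisfies min(p, 1/2) ≤ σ(s,p) ≤ max(p, 1/2); equivalently |σ(s,p) - 1/2| ≤ |p - 1/2|. In particular σ(s, 1/2) = 1/2, i.e., the maximally polarized state p = 1/2 is absorbing. -/
import Mathlib


/-- Current-period return: `R 1 p' = H·𝟙{p' ≥ 1/2}`, `R 0 p' = H·𝟙{p' ≤ 1/2}`. -/
noncomputable def Rret (H : ℝ) : Bool → ℝ → ℝ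
  | true, p' => if (1 : ℝ) / 2 ≤ p' then H else 0
  | false, p' => if p' ≤ (1 : ℝ) / 2 then H else 0

/-- Bellman operator of the single-elite infinite-horizon problem. -/
noncomputable def Bell (c : ℝ → ℝ) (H β pr : ℝ) (v : Bool → ℝ → ℝ) (s : Bool) (p : ℝ) : ℝ :=
  sSup ((fun p' => Rret H s p' - c (p' - p) +
      β * (pr * v true p' + (1 - pr) * v false p')) '' Set.Icc (0 : ℝ) 1)

/-- Polarization pull of the optimal policy: every maximizer stays weakly
between `p` and `1/2`, and `p = 1/2` is absorbing. -/
theorem polarization_pull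
    (c : ℝ → ℝ) (H β pr : ℝ) (V : Bool → ℝ → ℝ) (σ : Bool → ℝ → ℝ)
    (hc0 : c 0 = 0)
    (hceven : ∀ x, c (-x) = c x)
    (hcmono : StrictMonoOn c (Set.Ici (0 : ℝ)))
    (hcconv : StrictConvexOn ℝ Set.univ c)
    (hccont : Continuous c)
    (hH : 0 < H) (hβ : β ∈ Set.Ioo (0 : ℝ) 1) (hpr : pr ∈ Set.Ioo (0 : ℝ) 1)
    (hVbdd : ∃ M, ∀ s, ∀ p ∈ Set.Icc (0 : ℝ) 1, |V s p| ≤ M)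
    (hVfix : ∀ s, ∀ p ∈ Set.Icc (0 : ℝ) 1, V s p = Bell c H β pr V s p)
    (hVpeak : ∀ s, MonotoneOn (V s) (Set.Icc (0 : ℝ) (1 / 2)) ∧
        AntitoneOn (V s) (Set.Icc (1 / 2 : ℝ) 1))
    (hσ : ∀ s, ∀ p ∈ Set.Icc (0 : ℝ) 1, σ s p ∈ Set.Icc (0 : ℝ) 1 ∧
        IsMaxOn (fun p' => Rret H s p' - c (p' - p) +
          β * (pr * V true p' + (1 - pr) * V false p')) (Set.Icc (0 : ℝ) 1) (σ s p)) :
    ∀ s, (∀ p ∈ Set.Icc (0 : ℝ) 1,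
        min p (1 / 2) ≤ σ s p ∧ σ s p ≤ max p (1 / 2) ∧
        |σ s p - 1 / 2| ≤ |p - 1 / 2|) ∧
      σ s (1 / 2) = 1 / 2 := by
  intro s
  have hβ0 : (0:ℝ) ≤ β := le_of_lt hβ.1
  have hpr0 : (0:ℝ) ≤ pr := le_of_lt hpr.1
  have hpr1 : (0:ℝ) ≤ 1 - pr := by linarith [hpr.2]
  have main : ∀ p ∈ Set.Icc (0:ℝ) 1, min p (1/2) ≤ σ s p ∧ σ s p ≤ max p (1/2) := by
    intro p hp
    obtain ⟨hσmem, hmax⟩ := hσ s p hp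
    set x := σ s p with hxdef
    constructor
    · by_contra h
      push_neg at h
      set q := min p (1/2) with hq
      have hq1 : q ≤ 1/2 := min_le_right _ _
      have hqp : q ≤ p := min_le_left _ _
      have hq0 : (0:ℝ) ≤ q := le_min hp.1 (by norm_num)
      have hqmem : q ∈ Set.Icc (0:ℝ) 1 := ⟨hq0, le_trans hq1 (by norm_num)⟩
      have hxq : x < q := h
      have hR : Rret H s x ≤ Rret H s q := by
        cases s
        · simp only [Rret]
          rw [if_pos (le_trans hxq.le hq1), if_pos hq1]
        · simp only [Rret]
          rw [if_neg (by linarith [lt_of_lt_of_le hxq hq1] : ¬ (1:ℝ)/2 ≤ x)]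
          split_ifs <;> linarith
      have hcost : c (q - p) < c (x - p) := by
        have h1 : c (q - p) = c (p - q) := by rw [← hceven (p - q)]; ring_nf
        have h2 : c (x - p) = c (p - x) := by rw [← hceven (p - x)]; ring_nf
        rw [h1, h2]
        exact hcmono (by simp; linarith) (by simp; linarith) (by linarith)
      have hVle : ∀ s', V s' x ≤ V s' q := by
        intro s'
        exact (hVpeak s').1 ⟨hσmem.1, by linarith⟩ ⟨hq0, hq1⟩ hxq.le
      have hval : β * (pr * V true x + (1 - pr) * V false x)
          ≤ β * (pr * V true q + (1 - pr) * V false q) := by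
        have := hVle true; have := hVle false
        apply mul_le_mul_of_nonneg_left _ hβ0
        have h1 : pr * V true x ≤ pr * V true q :=
          mul_le_mul_of_nonneg_left (hVle true) hpr0
        have h2 : (1 - pr) * V false x ≤ (1 - pr) * V false q :=
          mul_le_mul_of_nonneg_left (hVle false) hpr1
        linarith
      have := hmax hqmem
      simp only [Set.mem_setOf_eq] at this
      linarith
    · by_contra h
      push_neg at h
      set q := max p (1/2) with hq
      have hq1 : (1:ℝ)/2 ≤ q := le_max_right _ _
      have hqp : p ≤ q := le_max_left _ _
      have hqle1 : q ≤ 1 := max_le hp.2 (by norm_num)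
      have hqmem : q ∈ Set.Icc (0:ℝ) 1 := ⟨by linarith, hqle1⟩
      have hxq : q < x := h
      have hR : Rret H s x ≤ Rret H s q := by
        cases s
        · simp only [Rret]
          rw [if_neg (by linarith : ¬ x ≤ (1:ℝ)/2)]
          split_ifs <;> linarith
        · simp only [Rret]
          rw [if_pos (le_trans hq1 hxq.le), if_pos hq1]
      have hcost : c (q - p) < c (x - p) := by
        exact hcmono (by simp; linarith) (by simp; linarith) (by linarith)
      have hVle : ∀ s', V s' x ≤ V s' q := by
        intro s'
        exact (hVpeak s').2 ⟨hq1, hqle1⟩ ⟨by linarith, hσmem.2⟩ hxq.le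
      have hval : β * (pr * V true x + (1 - pr) * V false x)
          ≤ β * (pr * V true q + (1 - pr) * V false q) := by
        apply mul_le_mul_of_nonneg_left _ hβ0
        have h1 : pr * V true x ≤ pr * V true q :=
          mul_le_mul_of_nonneg_left (hVle true) hpr0
        have h2 : (1 - pr) * V false x ≤ (1 - pr) * V false q :=
          mul_le_mul_of_nonneg_left (hVle false) hpr1
        linarith
      have := hmax hqmem
      simp only [Set.mem_setOf_eq] at this
      linarith
  refine ⟨fun p hp => ?_, ?_⟩
  · obtain ⟨h1, h2⟩ := main p hp
    refine ⟨h1, h2, ?_⟩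
    rcases le_total p (1/2) with hple | hple
    · rw [min_eq_left hple] at h1
      rw [max_eq_right hple] at h2
      rw [abs_of_nonpos (by linarith), abs_of_nonpos (by linarith)]
      linarith
    · rw [min_eq_right hple] at h1
      rw [max_eq_left hple] at h2
      rw [abs_of_nonneg (by linarith), abs_of_nonneg (by linarith)]
      linarith
  · have h12 : (1:ℝ)/2 ∈ Set.Icc (0:ℝ) 1 := by norm_num
    obtain ⟨h1, h2⟩ := main (1/2) h12
    simp only [min_self, max_self] at h1 h2
    linarith
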